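/- Let Σ_x be a real n×n positive semidefinite matrix, Φ a real ℓ×n matrix, and Σ := Σ_x^{1/2}·Φᵀ·Φ·Σ_x^{1/2}. Then lim_{σ²→0⁺} MMSE(σ²) = tr(Σ_x·P), where P is the matrix of the orthogonal projection of ℝⁿ (with the Euclidean inner product) onto the subspace ker(Σ) ∩ (ker Σ_x)^⊥, kernels being taken of the linear maps given by matrix-vector multiplication. -/

import Mathlib

open Matrix Filter Topology

/-- The positive semidefinite square root of a positive semidefinite matrix
(Mathlib's former `Matrix.PosSemidef.sqrt`, removed since; restored with its old definition). -/
noncomputable def Matrix.PosSemidef.sqrt {n : Type*} [Fintype n] [DecidableEq n]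
    {A : Matrix n n ℝ} (hA : A.PosSemidef) : Matrix n n ℝ :=
  hA.1.eigenvectorUnitary.1 * diagonal ((RCLike.ofReal : ℝ → ℝ) ∘ (√·) ∘ hA.1.eigenvalues) *
  (star hA.1.eigenvectorUnitary : Matrix n n ℝ)

private lemma tEL_mul {m k p : ℕ} (A : Matrix (Fin m) (Fin k) ℝ) (B : Matrix (Fin k) (Fin p) ℝ)
    (v : EuclideanSpace ℝ (Fin p)) :
    Matrix.toEuclideanLin (A * B) v = Matrix.toEuclideanLin A (Matrix.toEuclideanLin B v) := by
  simp [Matrix.toEuclideanLin_apply, Matrix.mulVec_mulVec]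

/-- lim_{σ²→0⁺} MMSE(σ²) = tr(Σ_x·P), where P is the matrix of the orthogonal
projection of ℝⁿ onto ker(Σ) ∩ (ker Σ_x)^⊥, with Σ = Σ_x^{1/2}·Φᵀ·Φ·Σ_x^{1/2}. -/
theorem stmt_2 {n l : ℕ} (Sx : Matrix (Fin n) (Fin n) ℝ) (hSx : Sx.PosSemidef)
    (Φ : Matrix (Fin l) (Fin n) ℝ)
    (K : Submodule ℝ (EuclideanSpace ℝ (Fin n)))
    (hK : K = LinearMap.ker (Matrix.toEuclideanLin (hSx.sqrt * Φᵀ * Φ * hSx.sqrt))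
      ⊓ (LinearMap.ker (Matrix.toEuclideanLin Sx))ᗮ)
    (P : Matrix (Fin n) (Fin n) ℝ)
    (hP : ∀ v : EuclideanSpace ℝ (Fin n),
      Matrix.toEuclideanLin P v = (K.orthogonalProjectionOnto v : EuclideanSpace ℝ (Fin n))) :
    Tendsto (fun σ2 : ℝ =>
        (Sx - Sx * Φᵀ * (σ2 • (1 : Matrix (Fin l) (Fin l) ℝ) + Φ * Sx * Φᵀ)⁻¹ * Φ * Sx).trace)
      (nhdsWithin 0 (Set.Ioi 0)) (nhds ((Sx * P).trace)) := by
  classical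
  set S : Matrix (Fin n) (Fin n) ℝ := hSx.sqrt with hSdef
  have hS : S * S = Sx := by
    set U0 : Matrix (Fin n) (Fin n) ℝ := (hSx.1.eigenvectorUnitary : Matrix (Fin n) (Fin n) ℝ)
      with hU0def
    have hUU0 : star U0 * U0 = 1 := Unitary.coe_star_mul_self _
    have hconj0 : ∀ d e : Fin n → ℝ,
        (U0 * diagonal d * star U0) * (U0 * diagonal e * star U0)
          = U0 * diagonal (fun i => d i * e i) * star U0 := by
      intro d e
      calc (U0 * diagonal d * star U0) * (U0 * diagonal e * star U0)
          = U0 * (diagonal d * ((star U0 * U0) * (diagonal e * star U0))) := by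
            simp only [Matrix.mul_assoc]
        _ = U0 * diagonal (fun i => d i * e i) * star U0 := by
            rw [hUU0, one_mul, ← Matrix.mul_assoc (diagonal d), Matrix.diagonal_mul_diagonal,
              Matrix.mul_assoc]
    have hsp := hSx.1.spectral_theorem
    rw [Unitary.conjStarAlgAut_apply] at hsp
    have hfg : (fun i => ((RCLike.ofReal : ℝ → ℝ) ∘ (√·) ∘ hSx.1.eigenvalues) i
        * ((RCLike.ofReal : ℝ → ℝ) ∘ (√·) ∘ hSx.1.eigenvalues) i)
        = ((RCLike.ofReal : ℝ → ℝ) ∘ hSx.1.eigenvalues) := by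
      funext i
      have h0 : 0 ≤ hSx.1.eigenvalues i := hSx.eigenvalues_nonneg i
      simp [Real.mul_self_sqrt h0]
    rw [hSdef, Matrix.PosSemidef.sqrt, hconj0, hfg]
    exact hsp.symm
  have hSsymm : Sᴴ = S := by
    rw [hSdef, Matrix.PosSemidef.sqrt]
    simp [Matrix.star_eq_conjTranspose, conjTranspose_mul, diagonal_conjTranspose,
      Matrix.mul_assoc]
  set Sg : Matrix (Fin n) (Fin n) ℝ := S * Φᵀ * Φ * S with hSgdef
  have hSgpsd : Sg.PosSemidef := by
    have h := Matrix.posSemidef_conjTranspose_mul_self (Φ * S)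
    have he : (Φ * S)ᴴ * (Φ * S) = Sg := by
      rw [conjTranspose_mul, hSsymm, conjTranspose_eq_transpose_of_trivial]
      simp only [hSgdef, Matrix.mul_assoc]
    rwa [he] at h
  have hSgh : Sg.IsHermitian := hSgpsd.isHermitian
  set μ : Fin n → ℝ := hSgh.eigenvalues with hμdef
  have hμ0 : ∀ i, 0 ≤ μ i := hSgpsd.eigenvalues_nonneg
  set U : Matrix (Fin n) (Fin n) ℝ :=
    (Matrix.IsHermitian.eigenvectorUnitary hSgh : Matrix (Fin n) (Fin n) ℝ) with hUdef
  have hUU : star U * U = 1 := Unitary.coe_star_mul_self _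
  have hUU' : U * star U = 1 := Unitary.coe_mul_star_self _
  have hspec : Sg = U * diagonal μ * star U := by
    have h := hSgh.spectral_theorem
    simpa using h
  have hconj : ∀ d e : Fin n → ℝ,
      (U * diagonal d * star U) * (U * diagonal e * star U)
        = U * diagonal (fun i => d i * e i) * star U := by
    intro d e
    calc (U * diagonal d * star U) * (U * diagonal e * star U)
        = U * (diagonal d * ((star U * U) * (diagonal e * star U))) := by
          simp only [Matrix.mul_assoc]
      _ = U * diagonal (fun i => d i * e i) * star U := by
          rw [hUU, one_mul, ← Matrix.mul_assoc (diagonal d), Matrix.diagonal_mul_diagonal,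
            Matrix.mul_assoc]
  -- the key trace identity for σ2 > 0
  have key : ∀ σ2 : ℝ, 0 < σ2 →
      (Sx - Sx * Φᵀ * (σ2 • (1 : Matrix (Fin l) (Fin l) ℝ) + Φ * Sx * Φᵀ)⁻¹ * Φ * Sx).trace
        = Sx.trace - ((U * diagonal (fun i => (σ2 + μ i)⁻¹ * μ i) * star U) * Sx).trace := by
    intro σ2 hσ
    set A : Matrix (Fin l) (Fin l) ℝ := σ2 • 1 + Φ * Sx * Φᵀ with hAdef
    set B : Matrix (Fin n) (Fin n) ℝ := σ2 • 1 + Sg with hBdef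
    have hsm1 : ∀ m : ℕ, (σ2 • (1 : Matrix (Fin m) (Fin m) ℝ)).PosDef := by
      intro m
      rw [smul_one_eq_diagonal]
      exact posDef_diagonal_iff.mpr fun i => hσ
    have hApd : A.PosDef := by
      have hpsd : (Φ * Sx * Φᵀ).PosSemidef := by
        have := hSx.mul_mul_conjTranspose_same Φ
        rwa [conjTranspose_eq_transpose_of_trivial] at this
      exact (hsm1 l).add_posSemidef hpsd
    have hBpd : B.PosDef := (hsm1 n).add_posSemidef hSgpsd
    have hAd : IsUnit A.det := Matrix.isUnit_iff_isUnit_det _ |>.mp hApd.isUnit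
    have hBd : IsUnit B.det := Matrix.isUnit_iff_isUnit_det _ |>.mp hBpd.isUnit
    have push : (S * Φᵀ) * A = B * (S * Φᵀ) := by
      rw [hAdef, hBdef, Matrix.mul_add, Matrix.add_mul]
      congr 1
      · rw [Matrix.mul_smul, Matrix.smul_mul, Matrix.mul_one, Matrix.one_mul]
      · rw [← hS, hSgdef]
        simp only [Matrix.mul_assoc]
    have pushinv : B⁻¹ * (S * Φᵀ) = (S * Φᵀ) * A⁻¹ := by
      have h1 : B⁻¹ * ((S * Φᵀ) * A) * A⁻¹ = B⁻¹ * (B * (S * Φᵀ)) * A⁻¹ := by rw [push]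
      calc B⁻¹ * (S * Φᵀ)
          = B⁻¹ * ((S * Φᵀ) * (A * A⁻¹)) := by rw [Matrix.mul_nonsing_inv _ hAd, Matrix.mul_one]
        _ = B⁻¹ * ((S * Φᵀ) * A) * A⁻¹ := by simp only [Matrix.mul_assoc]
        _ = B⁻¹ * (B * (S * Φᵀ)) * A⁻¹ := h1
        _ = (B⁻¹ * B) * ((S * Φᵀ) * A⁻¹) := by simp only [Matrix.mul_assoc]
        _ = (S * Φᵀ) * A⁻¹ := by rw [Matrix.nonsing_inv_mul _ hBd, Matrix.one_mul]
    have hmain : Sx * Φᵀ * A⁻¹ * Φ * Sx = S * (B⁻¹ * Sg) * S := by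
      conv_lhs => rw [← hS]
      rw [hSgdef, Matrix.mul_assoc S S Φᵀ, Matrix.mul_assoc S (S * Φᵀ) A⁻¹, ← pushinv]
      simp only [Matrix.mul_assoc]
    have hBeq : B = U * diagonal (fun i => σ2 + μ i) * star U := by
      have hdiagsum : diagonal (fun i : Fin n => σ2 + μ i)
          = σ2 • (1 : Matrix (Fin n) (Fin n) ℝ) + diagonal μ := by
        rw [smul_one_eq_diagonal, Matrix.diagonal_add]
      rw [hBdef, hdiagsum, Matrix.mul_add, Matrix.add_mul, Matrix.mul_smul, Matrix.mul_one,
        Matrix.smul_mul, hUU', ← hspec]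
    have hpos : ∀ i, (0:ℝ) < σ2 + μ i := fun i => by
      have := hμ0 i; linarith
    have hBinv : B⁻¹ = U * diagonal (fun i => (σ2 + μ i)⁻¹) * star U := by
      apply Matrix.inv_eq_right_inv
      rw [hBeq, hconj]
      have he : (fun i => (σ2 + μ i) * (σ2 + μ i)⁻¹) = fun _ : Fin n => (1:ℝ) :=
        funext fun i => mul_inv_cancel₀ (hpos i).ne'
      rw [he]
      have : diagonal (fun _ : Fin n => (1:ℝ)) = 1 := Matrix.diagonal_one
      rw [this, mul_one, hUU']
    have hBinvSg : B⁻¹ * Sg = U * diagonal (fun i => (σ2 + μ i)⁻¹ * μ i) * star U := by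
      rw [hBinv, hspec, hconj]
    calc (Sx - Sx * Φᵀ * A⁻¹ * Φ * Sx).trace
        = Sx.trace - (Sx * Φᵀ * A⁻¹ * Φ * Sx).trace := Matrix.trace_sub _ _
      _ = Sx.trace - (S * (B⁻¹ * Sg) * S).trace := by rw [hmain]
      _ = Sx.trace - ((B⁻¹ * Sg) * Sx).trace := by
          rw [Matrix.trace_mul_cycle S (B⁻¹ * Sg) S, hS, Matrix.trace_mul_comm]
      _ = Sx.trace - ((U * diagonal (fun i => (σ2 + μ i)⁻¹ * μ i) * star U) * Sx).trace := by
          rw [hBinvSg]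
  -- the limit diagonal
  set χ : Fin n → ℝ := fun i => if μ i = 0 then 0 else 1 with hχdef
  set g : (Fin n → ℝ) → ℝ :=
    fun d => Sx.trace - ((U * diagonal d * star U) * Sx).trace with hgdef
  have hgcont : Continuous g := by
    apply continuous_const.sub
    exact (((continuous_const.matrix_mul continuous_id.matrix_diagonal).matrix_mul
      continuous_const).matrix_mul continuous_const).matrix_trace
  have hd : Tendsto (fun σ2 : ℝ => fun i => (σ2 + μ i)⁻¹ * μ i)
      (nhdsWithin 0 (Set.Ioi 0)) (nhds χ) := by
    rw [tendsto_pi_nhds]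
    intro i
    by_cases h : μ i = 0
    · have he : (fun σ2 : ℝ => (σ2 + μ i)⁻¹ * μ i) = fun _ => (0:ℝ) := by
        funext σ2; simp [h]
      have hχi : χ i = 0 := by simp [hχdef, h]
      rw [he, hχi]
      exact tendsto_const_nhds
    · have hpos : 0 < μ i := lt_of_le_of_ne (hμ0 i) (Ne.symm h)
      have hc : ContinuousAt (fun σ2 : ℝ => (σ2 + μ i)⁻¹ * μ i) 0 := by
        have h1 : ContinuousAt (fun σ2 : ℝ => σ2 + μ i) 0 := by fun_prop
        exact (h1.inv₀ (by simpa using hpos.ne')).mul continuousAt_const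
      have h2 : Tendsto (fun σ2 : ℝ => (σ2 + μ i)⁻¹ * μ i) (nhdsWithin 0 (Set.Ioi 0))
          (nhds ((0 + μ i)⁻¹ * μ i)) := hc.tendsto.mono_left nhdsWithin_le_nhds
      simpa [hχdef, h, inv_mul_cancel₀ hpos.ne'] using h2
  have htend : Tendsto (fun σ2 : ℝ => g (fun i => (σ2 + μ i)⁻¹ * μ i))
      (nhdsWithin 0 (Set.Ioi 0)) (nhds (g χ)) := (hgcont.tendsto χ).comp hd
  -- the limit matrix and the projections
  set Q : Matrix (Fin n) (Fin n) ℝ := U * diagonal χ * star U with hQdef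
  set R : Matrix (Fin n) (Fin n) ℝ := 1 - Q with hRdef
  set W : Submodule ℝ (EuclideanSpace ℝ (Fin n)) :=
    LinearMap.ker (Matrix.toEuclideanLin Sg) with hWdef
  set V : Submodule ℝ (EuclideanSpace ℝ (Fin n)) :=
    LinearMap.ker (Matrix.toEuclideanLin Sx) with hVdef
  have hSgQ : Sg * Q = Sg := by
    rw [hQdef]
    conv_lhs => rw [hspec]
    rw [hconj]
    conv_rhs => rw [hspec]
    have he : (fun i => μ i * χ i) = μ := by
      funext i; by_cases h : μ i = 0 <;> simp [hχdef, h]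
    rw [he]
  have hSgR : Sg * R = 0 := by
    rw [hRdef, Matrix.mul_sub, Matrix.mul_one, hSgQ, sub_self]
  have hQW : ∀ w : EuclideanSpace ℝ (Fin n), w ∈ W →
      Q *ᵥ (WithLp.equiv 2 (Fin n → ℝ) w) = 0 := by
    intro w hw
    set w' := WithLp.equiv 2 (Fin n → ℝ) w with hw'def
    have hw0 : Sg *ᵥ w' = 0 := by
      rw [hWdef, LinearMap.mem_ker] at hw
      have := congrArg (WithLp.equiv 2 (Fin n → ℝ)) hw
      simpa [Matrix.toEuclideanLin_apply, hw'def] using this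
    have hy : diagonal μ *ᵥ (star U *ᵥ w') = 0 := by
      have h1 : star U *ᵥ (Sg *ᵥ w') = 0 := by rw [hw0, Matrix.mulVec_zero]
      rw [hspec, Matrix.mulVec_mulVec, ← Matrix.mul_assoc, ← Matrix.mul_assoc, hUU,
        Matrix.one_mul, ← Matrix.mulVec_mulVec] at h1
      exact h1
    have hy' : diagonal χ *ᵥ (star U *ᵥ w') = 0 := by
      funext i
      have h1 : μ i * (star U *ᵥ w') i = 0 := by
        have := congrFun hy i
        rwa [Matrix.mulVec_diagonal] at this
      rw [Matrix.mulVec_diagonal]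
      by_cases h : μ i = 0
      · simp [hχdef, h]
      · have : (star U *ᵥ w') i = 0 := by
          rcases mul_eq_zero.mp h1 with h' | h'
          · exact absurd h' h
          · exact h'
        simp [hχdef, this]
    rw [hQdef, ← Matrix.mulVec_mulVec, ← Matrix.mulVec_mulVec, hy', Matrix.mulVec_zero]
  have hStrans : Sᵀ = S := by
    rw [← conjTranspose_eq_transpose_of_trivial, hSsymm]
  have hQtrans : Qᵀ = Q := by
    rw [← conjTranspose_eq_transpose_of_trivial]
    rw [hQdef]
    simp [Matrix.star_eq_conjTranspose, conjTranspose_mul, diagonal_conjTranspose,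
      Matrix.mul_assoc]
  have hRproj : ∀ v : EuclideanSpace ℝ (Fin n),
      (W.orthogonalProjectionOnto v : EuclideanSpace ℝ (Fin n)) = Matrix.toEuclideanLin R v := by
    intro v
    apply Submodule.eq_starProjection_of_mem_of_inner_eq_zero
    · rw [hWdef, LinearMap.mem_ker, ← tEL_mul, hSgR]
      simp
    · intro w hw
      have h1 : v - Matrix.toEuclideanLin R v = Matrix.toEuclideanLin Q v := by
        have hone : Matrix.toEuclideanLin (1 : Matrix (Fin n) (Fin n) ℝ) v = v := by
          simp [Matrix.toEuclideanLin_apply]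
        rw [hRdef, map_sub, LinearMap.sub_apply, hone]
        abel
      rw [h1]
      -- ⟪Q v, w⟫ = 0
      rw [real_inner_comm]
      rw [EuclideanSpace.inner_eq_star_dotProduct]
      simp only [Matrix.toEuclideanLin_apply, Equiv.apply_symm_apply, star_trivial]
      have hQw : Q *ᵥ w.ofLp = 0 := hQW w hw
      rw [dotProduct_comm, Matrix.dotProduct_mulVec, ← Matrix.mulVec_transpose, hQtrans, hQw,
        zero_dotProduct]
  have hVW : V ≤ W := by
    intro v hv
    rw [hVdef, LinearMap.mem_ker] at hv
    rw [hWdef, LinearMap.mem_ker]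
    set v' := WithLp.equiv 2 (Fin n → ℝ) v with hv'def
    have hv0 : Sx *ᵥ v' = 0 := by
      have := congrArg (WithLp.equiv 2 (Fin n → ℝ)) hv
      simpa [Matrix.toEuclideanLin_apply, hv'def] using this
    have hSv : S *ᵥ v' = 0 := by
      have h0 : dotProduct (S *ᵥ v') (S *ᵥ v') = 0 := by
        rw [Matrix.dotProduct_mulVec]
        have he : (S *ᵥ v') ᵥ* S = Sx *ᵥ v' := by
          rw [← Matrix.mulVec_transpose, hStrans, Matrix.mulVec_mulVec, hS]
        rw [he, hv0, zero_dotProduct]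
      exact dotProduct_self_eq_zero.mp h0
    have hSgv : Sg *ᵥ v' = 0 := by
      rw [hSgdef, ← Matrix.mulVec_mulVec, hSv, Matrix.mulVec_zero]
    rw [Matrix.toEuclideanLin_apply, show v.ofLp = v' from rfl, hSgv]
    simp
  have hKW : K ≤ W := by rw [hK]; exact inf_le_left
  have hSxRP : Sx * R = Sx * P := by
    have hlin : Matrix.toEuclideanLin (Sx * R) = Matrix.toEuclideanLin (Sx * P) := by
      apply LinearMap.ext
      intro v
      rw [tEL_mul, tEL_mul, hP v, ← hRproj v]
      set w : EuclideanSpace ℝ (Fin n) :=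
        (W.orthogonalProjectionOnto v : EuclideanSpace ℝ (Fin n)) with hwdef
      have hwW : w ∈ W := (W.orthogonalProjectionOnto v).2
      have hprojK : (K.orthogonalProjectionOnto v : EuclideanSpace ℝ (Fin n))
          = (K.orthogonalProjectionOnto w : EuclideanSpace ℝ (Fin n)) := by
        rw [hwdef, ← Submodule.starProjection_apply W v,
          Submodule.orthogonalProjectionOnto_starProjection_of_le hKW]
      set x : EuclideanSpace ℝ (Fin n) :=
        w - (K.orthogonalProjectionOnto w : EuclideanSpace ℝ (Fin n)) with hxdef
      have hxK : x ∈ Kᗮ := Submodule.sub_starProjection_mem_orthogonal (K := K) w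
      have hxW : x ∈ W := W.sub_mem hwW (hKW (K.orthogonalProjectionOnto w).2)
      set y : EuclideanSpace ℝ (Fin n) :=
        x - (V.orthogonalProjectionOnto x : EuclideanSpace ℝ (Fin n)) with hydef
      have hyVp : y ∈ Vᗮ := Submodule.sub_starProjection_mem_orthogonal (K := V) x
      have hyW : y ∈ W := W.sub_mem hxW (hVW (V.orthogonalProjectionOnto x).2)
      have hyK : y ∈ K := by rw [hK]; exact ⟨hyW, hyVp⟩
      have h1 : inner (𝕜 := ℝ) y x = 0 := (Submodule.mem_orthogonal K x).mp hxK y hyK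
      have h2 : inner (𝕜 := ℝ)
          ((V.orthogonalProjectionOnto x : EuclideanSpace ℝ (Fin n))) y = 0 :=
        (Submodule.mem_orthogonal V y).mp hyVp _ (V.orthogonalProjectionOnto x).2
      have hy0 : y = 0 := by
        have h3 : inner (𝕜 := ℝ) y y = 0 := by
          have h4 : inner (𝕜 := ℝ) y y
              = inner (𝕜 := ℝ) x y
                - inner (𝕜 := ℝ) ((V.orthogonalProjectionOnto x : EuclideanSpace ℝ (Fin n))) y := by
            conv_lhs => rw [hydef]
            rw [inner_sub_left]
          have h5 := real_inner_comm x y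
          linarith
        exact inner_self_eq_zero.mp h3
      have hxV : x ∈ V := by
        have hxe : x = (V.orthogonalProjectionOnto x : EuclideanSpace ℝ (Fin n)) :=
          sub_eq_zero.mp (hydef.symm.trans hy0)
        rw [hxe]
        exact (V.orthogonalProjectionOnto x).2
      have hker : Matrix.toEuclideanLin Sx x = 0 := by
        rw [hVdef, LinearMap.mem_ker] at hxV
        exact hxV
      have h5 : Matrix.toEuclideanLin Sx w
          - Matrix.toEuclideanLin Sx ((K.orthogonalProjectionOnto w : EuclideanSpace ℝ (Fin n)))
          = 0 := by
        rw [← map_sub, ← hxdef, hker]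
      rw [hprojK]
      exact sub_eq_zero.mp h5
    exact (Matrix.toEuclideanLin (𝕜 := ℝ) (m := Fin n) (n := Fin n)).injective hlin
  have hval : g χ = (Sx * P).trace := by
    rw [hgdef]
    simp only
    rw [← hQdef]
    have h1 : Sx.trace - (Q * Sx).trace = (R * Sx).trace := by
      rw [hRdef, Matrix.sub_mul, Matrix.one_mul, Matrix.trace_sub]
    rw [h1, Matrix.trace_mul_comm, hSxRP]
  have hfinal : Tendsto (fun σ2 : ℝ => g (fun i => (σ2 + μ i)⁻¹ * μ i))
      (nhdsWithin 0 (Set.Ioi 0)) (nhds ((Sx * P).trace)) := hval ▸ htend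
  refine Filter.Tendsto.congr' ?_ hfinal
  filter_upwards [self_mem_nhdsWithin] with σ2 hσ
  simp only [hgdef]
  exact (key σ2 hσ).symm
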